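/- Let G be a finite group, H ≤ G, and X a based H-set (or H-space). There is a W_G(K)-equivariant bijection (G ×_H X)^K ≅ ⨿_{[KgH] ∈ (K:G:H)/W_G(K)} W_G(K) ×_{W_{gHg⁻¹}(K)} (c_g^* X)^{g⁻¹Kg}, where c_g^* X is X with the gHg⁻¹-action pulled back along conjugation by g. -/

import Mathlib

section

variable {G : Type*} [Group G] (K H : Subgroup G) (X : Type*) [MulAction H X]

/-- The balanced-product relation defining the induced `G`-set `G ×_H X` of an `H`-set `X`. -/
def indSetoid : Setoid (G × X) where
  r p q := ∃ h : H, q.1 = p.1 * h ∧ q.2 = h⁻¹ • p.2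
  iseqv := by
    constructor
    · exact fun p => ⟨1, by simp⟩
    · rintro p q ⟨h, h1, h2⟩
      exact ⟨h⁻¹, by simp [h1, mul_assoc], by simp [h2]⟩
    · rintro p q r ⟨h, h1, h2⟩ ⟨h', h1', h2'⟩
      exact ⟨h * h', by simp [h1', h1, mul_assoc], by simp [h2', h2, mul_smul]⟩

/-- The induced `G`-set `G ×_H X`. -/
def IndGH : Type _ := Quotient (indSetoid H X)

/-- The `G`-action on `G ×_H X`. -/
def IndGH.act (g : G) : IndGH H X → IndGH H X :=
  Quotient.map (fun p => (g * p.1, p.2))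
    (by rintro p q ⟨h, h1, h2⟩; exact ⟨h, by simp [h1, mul_assoc], h2⟩)

lemma IndGH.act_mul (a b : G) (z : IndGH H X) :
    IndGH.act H X (a * b) z = IndGH.act H X a (IndGH.act H X b z) :=
  Quotient.inductionOn z fun p => by
    simp only [IndGH.act, Quotient.map_mk]
    rw [mul_assoc]

/-- The `K`-fixed points of `G ×_H X`. -/
def FixK : Type _ := {z : IndGH H X // ∀ k ∈ K, IndGH.act H X k z = z}

lemma fixK_act_normalizer (n : (Subgroup.normalizer (K : Set G))) (z : FixK K H X) :
    ∀ k ∈ K, IndGH.act H X k (IndGH.act H X (n : G) z.1) = IndGH.act H X (n : G) z.1 := by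
  intro k hk
  have hmem : (n : G)⁻¹ * k * (n : G) ∈ K := by
    have := (Subgroup.mem_normalizer_iff.mp ((Subgroup.normalizer (K : Set G)).inv_mem n.2) k).mp hk
    rwa [inv_inv] at this
  have h1 : k * (n : G) = (n : G) * ((n : G)⁻¹ * k * (n : G)) := by group
  rw [← IndGH.act_mul, h1, IndGH.act_mul, z.2 _ hmem]

/-- The action of (a representative of) the Weyl group `W_G(K) = N_G(K)/K` on the `K`-fixed
points of `G ×_H X`. -/
def FixK.act (n : (Subgroup.normalizer (K : Set G))) (z : FixK K H X) : FixK K H X :=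
  ⟨IndGH.act H X (n : G) z.1, fixK_act_normalizer K H X n z⟩

/-- Admissible double-coset representatives: `g` with `g⁻¹Kg ⊆ H`. -/
def Admissibles : Type _ := {g : G // ∀ k ∈ K, g⁻¹ * k * g ∈ H}

/-- Admissible representatives up to the `W_G(K)`-action on double cosets in `K\G/H`,
i.e. the set of orbits `(K:G:H)/W_G(K)`. -/
def weylOrbitSetoid : Setoid (Admissibles K H) where
  r g g' := ∃ n ∈ (Subgroup.normalizer (K : Set G)), DoubleCoset.mk K H (n * g.1) = DoubleCoset.mk K H g'.1
  iseqv := by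
    constructor
    · exact fun g => ⟨1, (Subgroup.normalizer (K : Set G)).one_mem, by rw [one_mul]⟩
    · rintro g g' ⟨n, hn, hmk⟩
      obtain ⟨k, hk, h, hh, hEq⟩ := (DoubleCoset.eq K H (n * g.1) g'.1).mp hmk
      refine ⟨n⁻¹, (Subgroup.normalizer (K : Set G)).inv_mem hn, ?_⟩
      rw [DoubleCoset.eq]
      refine ⟨(n⁻¹ * k * n)⁻¹, K.inv_mem ?_, h⁻¹, H.inv_mem hh, ?_⟩
      · have := (Subgroup.mem_normalizer_iff.mp ((Subgroup.normalizer (K : Set G)).inv_mem hn) k).mp hk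
        rwa [inv_inv] at this
      · rw [hEq]; group
    · rintro g g' g'' ⟨n, hn, e⟩ ⟨n', hn', e'⟩
      obtain ⟨k, hk, h, hh, hEq⟩ := (DoubleCoset.eq K H (n * g.1) g'.1).mp e
      obtain ⟨k', hk', h', hh', hEq'⟩ := (DoubleCoset.eq K H (n' * g'.1) g''.1).mp e'
      refine ⟨n' * n, mul_mem hn' hn, ?_⟩
      rw [DoubleCoset.eq]
      refine ⟨k' * (n' * k * n'⁻¹), K.mul_mem hk' ((Subgroup.mem_normalizer_iff.mp hn' k).mp hk),
        h * h', H.mul_mem hh hh', ?_⟩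
      rw [hEq', hEq]; group

/-- The fixed points `X^{g⁻¹Kg}` of `c_g^* X`, for an admissible representative `g`. -/
abbrev FixedOfConj (c : Quotient (weylOrbitSetoid K H)) : Type _ :=
  {x : X // ∀ (k : G) (hk : k ∈ K),
    (⟨(Quotient.out c).1⁻¹ * k * (Quotient.out c).1,
      (Quotient.out c).2 k hk⟩ : H) • x = x}

/-- The balanced product `W_G(K) ×_{W_{gHg⁻¹}(K)} X^{g⁻¹Kg}`, presented as a quotient of
`N_G(K) × X^{g⁻¹Kg}`: `(n, x) ~ (k·n·(ghg⁻¹), h⁻¹x)` for `k ∈ K` and `h ∈ H` with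
`ghg⁻¹` normalizing `K` (the latter is automatic), using the identification
`W_{gHg⁻¹}(K) ≅ W_H(g⁻¹Kg)` by conjugation. -/
abbrev fiberRel (c : Quotient (weylOrbitSetoid K H))
    (p q : (Subgroup.normalizer (K : Set G)) × FixedOfConj K H X c) : Prop :=
  ∃ (k : K) (h : H),
    ((q.1 : G) = k * p.1 * ((Quotient.out c).1 * h * (Quotient.out c).1⁻¹)) ∧
    (q.2 : X) = h⁻¹ • (p.2 : X)

def fiberSetoid (c : Quotient (weylOrbitSetoid K H)) :
    Setoid ((Subgroup.normalizer (K : Set G)) × FixedOfConj K H X c) where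
  r := fiberRel K H X c
  iseqv := by
    constructor
    · intro p
      refine ⟨1, 1, by push_cast; group, by simp⟩
    · rintro p q ⟨k, h, e1, e2⟩
      refine ⟨k⁻¹, h⁻¹, by rw [e1]; push_cast; group, by rw [e2, inv_inv, smul_inv_smul]⟩
    · rintro p q r ⟨k, h, e1, e2⟩ ⟨k', h', e1', e2'⟩
      refine ⟨k' * k, h * h', by rw [e1', e1]; push_cast; group,
        by rw [e2', e2, smul_smul, ← mul_inv_rev]⟩

/-- The summand `W_G(K) ×_{W_{gHg⁻¹}(K)} (c_g^* X)^{g⁻¹Kg}` attached to an orbit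
`[KgH] ∈ (K:G:H)/W_G(K)`. -/
def Fib (c : Quotient (weylOrbitSetoid K H)) : Type _ :=
  Quotient (fiberSetoid K H X c)

/-- The `W_G(K)`-action (via representatives in `N_G(K)`) on the summand `Fib c`. -/
def Fib.act (c : Quotient (weylOrbitSetoid K H)) (n : (Subgroup.normalizer (K : Set G))) :
    Fib K H X c → Fib K H X c :=
  Quotient.map (fun p => (n * p.1, p.2))
    (by
      rintro p q ⟨k, h, h1, h2⟩
      refine ⟨⟨(n : G) * k * (n : G)⁻¹, (Subgroup.mem_normalizer_iff.mp n.2 k).mp k.2⟩, h,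
        ?_, h2⟩
      show ((n * q.1 : (Subgroup.normalizer (K : Set G))) : G) = _
      push_cast
      rw [h1]
      group)

end


section Aux

variable {G : Type*} [Group G] (K H : Subgroup G) (X : Type*) [MulAction H X]

lemma indAct_mk (g a : G) (x : X) :
    IndGH.act H X g (Quotient.mk (indSetoid H X) (a, x)) =
      Quotient.mk (indSetoid H X) (g * a, x) := rfl

lemma normalizer_conj_mem {m : G} (hm : m ∈ (Subgroup.normalizer (K : Set G))) {k : G} (hk : k ∈ K) :
    m⁻¹ * k * m ∈ K := by
  have := (Subgroup.mem_normalizer_iff.mp ((Subgroup.normalizer (K : Set G)).inv_mem hm) k).mp hk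
  rwa [inv_inv] at this

lemma fmap_fixed (c : Quotient (weylOrbitSetoid K H))
    (m : (Subgroup.normalizer (K : Set G))) (x : FixedOfConj K H X c) :
    ∀ k ∈ K, IndGH.act H X k
        (Quotient.mk (indSetoid H X) ((m : G) * (Quotient.out c).1, (x : X))) =
      Quotient.mk (indSetoid H X) ((m : G) * (Quotient.out c).1, (x : X)) := by
  intro k hk
  set g₀ := (Quotient.out c).1 with hg₀
  have hk1 : (m : G)⁻¹ * k⁻¹ * (m : G) ∈ K := normalizer_conj_mem K m.2 (K.inv_mem hk)
  have hk2 : (m : G)⁻¹ * k * (m : G) ∈ K := normalizer_conj_mem K m.2 hk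
  rw [indAct_mk]
  refine Quotient.sound ⟨⟨g₀⁻¹ * ((m : G)⁻¹ * k⁻¹ * (m : G)) * g₀,
    (Quotient.out c).2 _ hk1⟩, ?_, ?_⟩
  · show (m : G) * g₀ = k * ((m : G) * g₀) * (g₀⁻¹ * ((m : G)⁻¹ * k⁻¹ * (m : G)) * g₀)
    group
  · show (x : X) = _ • (x : X)
    have hinv : (⟨g₀⁻¹ * ((m : G)⁻¹ * k⁻¹ * (m : G)) * g₀,
        (Quotient.out c).2 _ hk1⟩ : H)⁻¹ =
        ⟨g₀⁻¹ * ((m : G)⁻¹ * k * (m : G)) * g₀, (Quotient.out c).2 _ hk2⟩ := by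
      apply Subtype.ext
      push_cast
      group
    rw [hinv]
    exact (x.2 _ hk2).symm

/-- The map from the decomposition back to the fixed points. -/
noncomputable def bigF : (Σ c : Quotient (weylOrbitSetoid K H), Fib K H X c) → FixK K H X :=
  fun w => Quotient.liftOn w.2
    (fun p => (⟨Quotient.mk (indSetoid H X) ((p.1 : G) * (Quotient.out w.1).1, (p.2 : X)),
      fmap_fixed K H X w.1 p.1 p.2⟩ : FixK K H X))
    (by
      rintro p q ⟨k, h, e1, e2⟩
      apply Subtype.ext
      show Quotient.mk (indSetoid H X) ((p.1 : G) * (Quotient.out w.1).1, (p.2 : X)) =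
        Quotient.mk (indSetoid H X) ((q.1 : G) * (Quotient.out w.1).1, (q.2 : X))
      have step : Quotient.mk (indSetoid H X) ((q.1 : G) * (Quotient.out w.1).1, (q.2 : X)) =
          IndGH.act H X (k : G)
            (Quotient.mk (indSetoid H X) ((p.1 : G) * (Quotient.out w.1).1, (p.2 : X))) := by
        rw [indAct_mk]
        refine Eq.symm (Quotient.sound ?_)
        refine ⟨h, ?_, e2⟩
        show (q.1 : G) * (Quotient.out w.1).1 = (k : G) * ((p.1 : G) * (Quotient.out w.1).1) * (h : G)
        rw [e1]; push_cast; group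
      rw [step, fmap_fixed K H X w.1 p.1 p.2 (k : G) k.2])

lemma bigF_mk (c : Quotient (weylOrbitSetoid K H))
    (m : (Subgroup.normalizer (K : Set G))) (x : FixedOfConj K H X c) :
    bigF K H X ⟨c, Quotient.mk (fiberSetoid K H X c) (m, x)⟩ =
      ⟨Quotient.mk (indSetoid H X) ((m : G) * (Quotient.out c).1, (x : X)),
        fmap_fixed K H X c m x⟩ := rfl

lemma bigF_injective : Function.Injective (bigF K H X) := by
  rintro ⟨c, f⟩ ⟨c', f'⟩ hEq
  obtain ⟨p, rfl⟩ := Quotient.exists_rep f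
  obtain ⟨q, rfl⟩ := Quotient.exists_rep f'
  rw [bigF_mk, bigF_mk] at hEq
  have hq := Subtype.ext_iff.mp hEq
  obtain ⟨h, h1, h2⟩ := Quotient.exact hq
  dsimp only at h1 h2
  -- h1 : (q.1 : G) * (out c').1 = (p.1 : G) * (out c).1 * h
  have hcc : c = c' := by
    rw [← Quotient.out_eq c, ← Quotient.out_eq c']
    refine Quotient.sound ⟨(q.1 : G)⁻¹ * (p.1 : G),
      mul_mem ((Subgroup.normalizer (K : Set G)).inv_mem q.1.2) p.1.2, ?_⟩
    rw [DoubleCoset.eq]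
    refine ⟨1, K.one_mem, (h : G), h.2, ?_⟩
    rw [one_mul]
    have : (Quotient.out c').1 = (q.1 : G)⁻¹ * ((p.1 : G) * (Quotient.out c).1 * (h : G)) := by
      rw [← h1]; group
    rw [this]; group
  subst hcc
  have hfib : (fiberSetoid K H X c).r p q := by
    refine ⟨1, h, ?_, h2⟩
    push_cast
    rw [one_mul]
    have : (q.1 : G) * (Quotient.out c).1 * (Quotient.out c).1⁻¹ =
        (p.1 : G) * (Quotient.out c).1 * (h : G) * (Quotient.out c).1⁻¹ := by rw [h1]
    calc (q.1 : G) = (q.1 : G) * (Quotient.out c).1 * (Quotient.out c).1⁻¹ := by group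
      _ = (p.1 : G) * ((Quotient.out c).1 * (h : G) * (Quotient.out c).1⁻¹) := by
          rw [this]; group
  exact congrArg (Sigma.mk c) (Quotient.sound hfib)

lemma bigF_surjective : Function.Surjective (bigF K H X) := by
  rintro ⟨z, hz⟩
  obtain ⟨⟨g, x⟩, rfl⟩ := Quotient.exists_rep z
  have adm : ∀ k ∈ K, g⁻¹ * k * g ∈ H := by
    intro k hk
    have h0 := hz k⁻¹ (K.inv_mem hk)
    rw [indAct_mk] at h0
    obtain ⟨h, h1, h2⟩ := Quotient.exact h0
    have hcoe : (h : G) = g⁻¹ * k * g := by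
      refine mul_left_cancel (a := k⁻¹ * g) ?_
      rw [← h1]; group
    rw [← hcoe]; exact h.2
  have fixx : ∀ (k : G) (hk : k ∈ K), (⟨g⁻¹ * k * g, adm k hk⟩ : H) • x = x := by
    intro k hk
    have h0 := hz k hk
    rw [indAct_mk] at h0
    obtain ⟨h, h1, h2⟩ := Quotient.exact h0
    have hcoe : (h : G) = g⁻¹ * k⁻¹ * g := by
      refine mul_left_cancel (a := k * g) ?_
      rw [← h1]; group
    have hh : h⁻¹ = (⟨g⁻¹ * k * g, adm k hk⟩ : H) := by
      apply Subtype.ext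
      push_cast
      rw [hcoe]; group
    rw [hh] at h2
    exact h2.symm
  set c : Quotient (weylOrbitSetoid K H) := Quotient.mk _ (⟨g, adm⟩ : Admissibles K H) with hc
  obtain ⟨n, hn, hd⟩ := Quotient.mk_out (s := weylOrbitSetoid K H) (⟨g, adm⟩ : Admissibles K H)
  obtain ⟨k, hk, h, hh, heq0⟩ := (DoubleCoset.eq K H _ _).mp hd
  set g₀ := (Quotient.out c).1 with hg₀
  have heq : g = k * (n * g₀) * h := heq0
  set m : (Subgroup.normalizer (K : Set G)) := ⟨k * n, mul_mem (Subgroup.le_normalizer hk) hn⟩ with hm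
  have hx' : ∀ (k' : G) (hk' : k' ∈ K),
      (⟨g₀⁻¹ * k' * g₀, (Quotient.out c).2 k' hk'⟩ : H) • ((⟨h, hh⟩ : H) • x) =
        (⟨h, hh⟩ : H) • x := by
    intro k' hk'
    have hk'' : (k * n) * k' * (k * n)⁻¹ ∈ K :=
      (Subgroup.mem_normalizer_iff.mp (mul_mem (Subgroup.le_normalizer hk) hn) k').mp hk'
    have key : (⟨g₀⁻¹ * k' * g₀, (Quotient.out c).2 k' hk'⟩ : H) =
        (⟨h, hh⟩ : H) * ⟨g⁻¹ * ((k * n) * k' * (k * n)⁻¹) * g, adm _ hk''⟩ *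
          (⟨h, hh⟩ : H)⁻¹ := by
      apply Subtype.ext
      push_cast
      rw [heq]
      group
    rw [key, mul_smul, mul_smul, inv_smul_smul, fixx _ hk'']
  refine ⟨⟨c, Quotient.mk _ (m, ⟨(⟨h, hh⟩ : H) • x, hx'⟩)⟩, ?_⟩
  rw [bigF_mk]
  apply Subtype.ext
  show Quotient.mk (indSetoid H X) ((m : G) * g₀, (⟨h, hh⟩ : H) • x) =
    Quotient.mk (indSetoid H X) (g, x)
  refine Eq.symm (Quotient.sound ?_)
  refine ⟨(⟨h, hh⟩ : H)⁻¹, ?_, ?_⟩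
  · show (m : G) * g₀ = g * (((⟨h, hh⟩ : H)⁻¹ : H) : G)
    rw [heq]; push_cast; group; rfl
  · show (⟨h, hh⟩ : H) • x = (⟨h, hh⟩ : H)⁻¹⁻¹ • x
    rw [inv_inv]

lemma bigF_equivariant (c : Quotient (weylOrbitSetoid K H)) (n : (Subgroup.normalizer (K : Set G)))
    (f : Fib K H X c) :
    bigF K H X ⟨c, Fib.act K H X c n f⟩ = FixK.act K H X n (bigF K H X ⟨c, f⟩) := by
  obtain ⟨⟨m, x⟩, rfl⟩ := Quotient.exists_rep f
  show bigF K H X ⟨c, Quotient.mk _ (n * m, x)⟩ = _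
  rw [bigF_mk, bigF_mk]
  apply Subtype.ext
  show Quotient.mk (indSetoid H X) (((n * m : (Subgroup.normalizer (K : Set G))) : G) * (Quotient.out c).1, (x : X)) =
    IndGH.act H X (n : G)
      (Quotient.mk (indSetoid H X) ((m : G) * (Quotient.out c).1, (x : X)))
  rw [indAct_mk]
  congr 1
  push_cast
  rw [mul_assoc]

end Aux

/-- For `K, H ≤ G` and a (based) `H`-set `X`, there is a `W_G(K)`-equivariant
bijection between the `K`-fixed points of the induced `G`-set `G ×_H X` and the disjoint
union, over orbits `[KgH] ∈ (K:G:H)/W_G(K)`, of the induced `W_G(K)`-sets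
`W_G(K) ×_{W_{gHg⁻¹}(K)} (c_g^* X)^{g⁻¹Kg}`.  Equivariance is expressed via representatives
`n ∈ N_G(K)` of elements of `W_G(K)`. -/
theorem fixed_points_of_induced_weyl_equivariant_decomposition
    {G : Type*} [Group G] [Fintype G] (K H : Subgroup G)
    (X : Type*) [MulAction H X] :
    ∃ e : FixK K H X ≃ Σ c : Quotient (weylOrbitSetoid K H), Fib K H X c,
      ∀ (n : (Subgroup.normalizer (K : Set G))) (z : FixK K H X),
        e (FixK.act K H X n z) = ⟨(e z).1, Fib.act K H X (e z).1 n (e z).2⟩ := by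
  set E := Equiv.ofBijective (bigF K H X) ⟨bigF_injective K H X, bigF_surjective K H X⟩ with hE
  refine ⟨E.symm, ?_⟩
  intro n z
  rw [Equiv.symm_apply_eq]
  have h1 : E ⟨(E.symm z).1, Fib.act K H X (E.symm z).1 n (E.symm z).2⟩ =
      bigF K H X ⟨(E.symm z).1, Fib.act K H X (E.symm z).1 n (E.symm z).2⟩ := rfl
  rw [h1, bigF_equivariant]
  have h2 : bigF K H X ⟨(E.symm z).1, (E.symm z).2⟩ = E (E.symm z) := rfl
  rw [h2, E.apply_symm_apply]
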